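/- arXiv:1103.5010 — 2 statements merged into one kernel-verified Lean document; each statement's English description precedes it below -/
import Mathlib

section
/- Let t, s be real numbers with 0 < t < 1/2 and (7t − 2)/(6(t + 1)) < s ≤ 1/6. For k an integer put z(k) = (−k³/6 + s·k) + i·(k²/2 − t) ∈ C. Then the four complex numbers w₁ = −z(−1), w₂ = z(0), w₃ = −z(1), w₄ = z(2) are all nonzero, and there exists φ₀ ∈ (0, 1) such that each wⱼ can be written as r·exp(iπφ) with r > 0 and φ₀ ≤ φ ≤ φ₀ + 1. -/
open Complex Real

private lemma polar_shift (w : ℂ) (hw : w ≠ 0) :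
    w = ↑(‖w‖) *
      Complex.exp (↑Real.pi * ↑(w.arg / Real.pi + 2) * Complex.I) := by
  have hπ : (Real.pi : ℝ) ≠ 0 := Real.pi_ne_zero
  have h : Real.pi * (w.arg / Real.pi + 2) = w.arg + 2 * Real.pi := by
    field_simp
  rw [← Complex.ofReal_mul, h]
  push_cast
  rw [add_mul, Complex.exp_add, (by ring : ((2:ℂ) * ↑Real.pi * Complex.I)
      = 2 * ↑Real.pi * Complex.I), Complex.exp_two_pi_mul_I, mul_one]
  exact (Complex.norm_mul_exp_arg_mul_I w).symm

private lemma polar_basic (w : ℂ) :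
    w = ↑(‖w‖) *
      Complex.exp (↑Real.pi * ↑(w.arg / Real.pi) * Complex.I) := by
  have hπ : (Real.pi : ℝ) ≠ 0 := Real.pi_ne_zero
  have h : Real.pi * (w.arg / Real.pi) = w.arg := by field_simp
  rw [← Complex.ofReal_mul, h]
  exact (Complex.norm_mul_exp_arg_mul_I w).symm


private lemma my_arg_le_arg {a b : ℂ} (ha : 0 < a.im) (hb : 0 < b.im)
    (h : a.im * b.re ≤ a.re * b.im) : a.arg ≤ b.arg := by
  by_contra hlt
  push_neg at hlt
  have ha0 : a ≠ 0 := fun h0 => by simp [h0] at ha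
  have hb0 : b ≠ 0 := fun h0 => by simp [h0] at hb
  have hapi : a.arg < π := by
    rcases lt_or_eq_of_le (Complex.arg_le_pi a) with h' | h'
    · exact h'
    · exact absurd (Complex.arg_eq_pi_iff.mp h').2 (by linarith)
  have hb0' : 0 ≤ b.arg := Complex.arg_nonneg_iff.mpr hb.le
  have hsin : Real.sin (b.arg - a.arg) < 0 :=
    Real.sin_neg_of_neg_of_neg_pi_lt (by linarith) (by linarith)
  rw [Real.sin_sub, Complex.sin_arg, Complex.cos_arg hb0, Complex.sin_arg,
    Complex.cos_arg ha0] at hsin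
  have habsa : 0 < ‖a‖ := norm_pos_iff.mpr ha0
  have habsb : 0 < ‖b‖ := norm_pos_iff.mpr hb0
  rw [div_mul_div_comm, div_mul_div_comm, div_sub_div_same, div_neg_iff] at hsin
  rcases hsin with ⟨_, h2⟩ | ⟨h1, _⟩
  · nlinarith
  · nlinarith

private lemma my_arg_lt_arg {a b : ℂ} (ha : 0 < a.im) (hb : 0 < b.im)
    (h : a.im * b.re < a.re * b.im) : a.arg < b.arg := by
  rcases lt_or_eq_of_le (my_arg_le_arg ha hb h.le) with h' | h'
  · exact h'
  have ha0 : a ≠ 0 := fun h0 => by simp [h0] at ha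
  have hb0 : b ≠ 0 := fun h0 => by simp [h0] at hb
  exfalso
  have hsa := Complex.sin_arg a
  have hca := Complex.cos_arg ha0
  have hsb := Complex.sin_arg b
  have hcb := Complex.cos_arg hb0
  rw [h'] at hsa hca
  have habsa : 0 < ‖a‖ := norm_pos_iff.mpr ha0
  have habsb : 0 < ‖b‖ := norm_pos_iff.mpr hb0
  have e1 : a.im * ‖b‖ = b.im * ‖a‖ := by
    have h0 := hsa.symm.trans hsb
    field_simp at h0
    linarith [h0]
  have e2 : a.re * ‖b‖ = b.re * ‖a‖ := by
    have h0 := hca.symm.trans hcb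
    field_simp at h0
    linarith [h0]
  have key : (a.re * b.im - a.im * b.re) * ‖b‖ = 0 := by
    linear_combination b.im * e2 - b.re * e1
  nlinarith [key]

set_option maxHeartbeats 1000000 in
theorem stmt_9 (t s : ℝ) (ht0 : 0 < t) (ht1 : t < 1/2)
    (hs1 : (7 * t - 2) / (6 * (t + 1)) < s) (hs2 : s ≤ 1/6)
    (z : ℤ → ℂ)
    (hz : ∀ k : ℤ, z k = (-(k : ℂ) ^ 3 / 6 + (s : ℂ) * k) +
      Complex.I * ((k : ℂ) ^ 2 / 2 - (t : ℂ)))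
    (w₁ w₂ w₃ w₄ : ℂ)
    (hw₁ : w₁ = -z (-1)) (hw₂ : w₂ = z 0) (hw₃ : w₃ = -z 1) (hw₄ : w₄ = z 2) :
    (w₁ ≠ 0 ∧ w₂ ≠ 0 ∧ w₃ ≠ 0 ∧ w₄ ≠ 0) ∧
      ∃ φ₀ : ℝ, 0 < φ₀ ∧ φ₀ < 1 ∧
        ∀ w ∈ ({w₁, w₂, w₃, w₄} : Set ℂ), ∃ r φ : ℝ, 0 < r ∧
          φ₀ ≤ φ ∧ φ ≤ φ₀ + 1 ∧ w = r * Complex.exp (Real.pi * φ * Complex.I) := by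
  have hπ : (0:ℝ) < Real.pi := Real.pi_pos
  have h1 : w₁ = (↑(s - 1/6) : ℂ) + ↑(t - 1/2) * Complex.I := by
    rw [hw₁, hz]; push_cast; ring
  have h2 : w₂ = (↑(0:ℝ) : ℂ) + ↑(-t) * Complex.I := by
    rw [hw₂, hz]; push_cast; ring
  have h3 : w₃ = (↑(1/6 - s) : ℂ) + ↑(t - 1/2) * Complex.I := by
    rw [hw₃, hz]; push_cast; ring
  have h4 : w₄ = (↑(2*s - 4/3) : ℂ) + ↑(2 - t) * Complex.I := by
    rw [hw₄, hz]; push_cast; ring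
  have r1 : w₁.re = s - 1/6 := by rw [h1]; simp
  have i1 : w₁.im = t - 1/2 := by rw [h1]; simp
  have r2 : w₂.re = 0 := by rw [h2]; simp
  have i2 : w₂.im = -t := by rw [h2]; simp
  have r3 : w₃.re = 1/6 - s := by rw [h3]; simp
  have i3 : w₃.im = t - 1/2 := by rw [h3]; simp
  have r4 : w₄.re = 2*s - 4/3 := by rw [h4]; simp
  have i4 : w₄.im = 2 - t := by rw [h4]; simp
  have him4 : 0 < w₄.im := by rw [i4]; linarith
  have hne1 : w₁ ≠ 0 := by intro h0; rw [h0] at i1; simp at i1; linarith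
  have hne2 : w₂ ≠ 0 := by intro h0; rw [h0] at i2; simp at i2; linarith
  have hne3 : w₃ ≠ 0 := by intro h0; rw [h0] at i3; simp at i3; linarith
  have hne4 : w₄ ≠ 0 := by intro h0; rw [h0] at i4; simp at i4; linarith
  have hs1' : 7 * t - 2 < s * (6 * (t + 1)) := by
    have hden : (0:ℝ) < 6 * (t + 1) := by linarith
    exact (div_lt_iff₀ hden).mp hs1
  -- π/2 ≤ arg w₄
  have hI4 : Real.pi / 2 ≤ w₄.arg := by
    have := my_arg_le_arg (a := Complex.I) (b := w₄) (by simp) him4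
      (by simp [r4, i4]; linarith)
    rwa [Complex.arg_I] at this
  have ha4pi : w₄.arg < Real.pi := by
    rcases lt_or_eq_of_le (Complex.arg_le_pi w₄) with h' | h'
    · exact h'
    · exact absurd (Complex.arg_eq_pi_iff.mp h').2 (by linarith)
  -- arg w₁ + π ≤ π/2
  have ha1 : w₁.arg + Real.pi ≤ Real.pi / 2 := by
    have him : 0 < (-w₁).im := by simp [i1]; linarith
    have := my_arg_le_arg (a := -w₁) (b := Complex.I) him (by simp)
      (by simp [r1, i1]; linarith)
    rwa [Complex.arg_neg_eq_arg_add_pi_of_im_neg (by rw [i1]; linarith),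
      Complex.arg_I] at this
  -- arg w₃ + π ≤ arg w₄
  have ha3 : w₃.arg + Real.pi ≤ w₄.arg := by
    have him : 0 < (-w₃).im := by simp [i3]; linarith
    have := my_arg_le_arg (a := -w₃) (b := w₄) him him4
      (by simp [r3, i3, r4, i4]; nlinarith)
    rwa [Complex.arg_neg_eq_arg_add_pi_of_im_neg (by rw [i3]; linarith)] at this
  have ha2 : w₂.arg = -(Real.pi / 2) :=
    Complex.arg_eq_neg_pi_div_two_iff.mpr ⟨r2, by rw [i2]; linarith⟩
  refine ⟨⟨hne1, hne2, hne3, hne4⟩, w₄.arg / Real.pi, ?_, ?_, ?_⟩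
  · exact div_pos (by linarith) hπ
  · exact (div_lt_one hπ).mpr ha4pi
  · have hphi_half : 1/2 ≤ w₄.arg / Real.pi := by
      rw [le_div_iff₀ hπ]; linarith
    have hphi_lt1 : w₄.arg / Real.pi < 1 := (div_lt_one hπ).mpr ha4pi
    intro w hw
    simp only [Set.mem_insert_iff, Set.mem_singleton_iff] at hw
    rcases hw with rfl | rfl | rfl | rfl
    · refine ⟨‖w‖, w.arg / Real.pi + 2, norm_pos_iff.mpr hne1, ?_, ?_,
        polar_shift w hne1⟩
      · have : -Real.pi < w.arg := Complex.neg_pi_lt_arg w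
        have : (-1:ℝ) < w.arg / Real.pi := by
          rw [lt_div_iff₀ hπ]; linarith
        linarith
      · have hq : (w.arg + Real.pi) / Real.pi ≤ w₄.arg / Real.pi :=
          (div_le_div_iff_of_pos_right hπ).mpr (by linarith)
        rw [add_div, div_self (ne_of_gt hπ)] at hq
        linarith
    · refine ⟨‖w‖, 3/2, norm_pos_iff.mpr hne2, by linarith, by linarith, ?_⟩
      have he : w.arg / Real.pi + 2 = 3/2 := by
        rw [ha2]
        field_simp
        ring
      rw [← he]
      exact polar_shift w hne2
    · refine ⟨‖w‖, w.arg / Real.pi + 2, norm_pos_iff.mpr hne3, ?_, ?_,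
        polar_shift w hne3⟩
      · have : -Real.pi < w.arg := Complex.neg_pi_lt_arg w
        have : (-1:ℝ) < w.arg / Real.pi := by
          rw [lt_div_iff₀ hπ]; linarith
        linarith
      · have hq : (w.arg + Real.pi) / Real.pi ≤ w₄.arg / Real.pi :=
          (div_le_div_iff_of_pos_right hπ).mpr (by linarith)
        rw [add_div, div_self (ne_of_gt hπ)] at hq
        linarith
    · exact ⟨‖w‖, w.arg / Real.pi, norm_pos_iff.mpr hne4, le_refl _,
        by linarith, polar_basic w⟩
end

section
/- Let 𝒜 be an abelian category and let v be a function assigning to each object of 𝒜 a natural number, such that v(B) = v(A) + v(C) for every short exact sequence 0 → A → B → C → 0 in 𝒜. Assume: (i) every object E of 𝒜 has a subobject T(E) ⊆ E with v(T(E)) = 0 such that every subobject L ⊆ E with v(L) = 0 is contained in T(E); and (ii) for every object T with v(T) = 0, every ascending chain of subobjects of T stabilizes. Then 𝒜 is Noetherian, i.e., for every object E of 𝒜 every ascending chain of subobjects of E stabilizes. -/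
open CategoryTheory CategoryTheory.Limits

section Aux

variable {C : Type*} [Category C] [Abelian C]

/-- `v` is invariant under isomorphism (one direction). -/
lemma v_iso_aux (v : C → ℕ)
    (hv : ∀ S : ShortComplex C, S.ShortExact → v S.X₂ = v S.X₁ + v S.X₃)
    {X Y : C} (e : X ≅ Y) : v Y ≤ v X := by
  have hse : (ShortComplex.mk (kernel.ι e.hom) e.hom (kernel.condition e.hom)).ShortExact :=
    { exact := ShortComplex.exact_of_f_is_kernel _ (kernelIsKernel e.hom) }
  have h := hv _ hse
  dsimp at h
  omega

lemma v_iso (v : C → ℕ)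
    (hv : ∀ S : ShortComplex C, S.ShortExact → v S.X₂ = v S.X₁ + v S.X₃)
    {X Y : C} (e : X ≅ Y) : v X = v Y :=
  le_antisymm (v_iso_aux v hv e.symm) (v_iso_aux v hv e)

/-- additivity along a mono and its cokernel -/
lemma v_mono (v : C → ℕ)
    (hv : ∀ S : ShortComplex C, S.ShortExact → v S.X₂ = v S.X₁ + v S.X₃)
    {X Y : C} (m : X ⟶ Y) [Mono m] : v Y = v X + v (cokernel m) := by
  have hse : (ShortComplex.mk m (cokernel.π m) (cokernel.condition m)).ShortExact :=
    { exact := ShortComplex.exact_of_g_is_cokernel _ (cokernelIsCokernel m) }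
  exact hv _ hse

lemma v_le_of_le (v : C → ℕ)
    (hv : ∀ S : ShortComplex C, S.ShortExact → v S.X₂ = v S.X₁ + v S.X₃)
    {E : C} {X Y : Subobject E} (h : X ≤ Y) : v (X : C) ≤ v (Y : C) := by
  have := v_mono v hv (Subobject.ofLE X Y h)
  omega

lemma v_le_total (v : C → ℕ)
    (hv : ∀ S : ShortComplex C, S.ShortExact → v S.X₂ = v S.X₁ + v S.X₃)
    {E : C} (X : Subobject E) : v (X : C) ≤ v E := by
  have h1 : v (X : C) ≤ v ((⊤ : Subobject E) : C) := v_le_of_le v hv le_top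
  have h2 : v ((⊤ : Subobject E) : C) = v E := v_iso v hv (asIso (⊤ : Subobject E).arrow)
  omega

end Aux

theorem stmt_11 {C : Type*} [Category C] [Abelian C]
    (v : C → ℕ)
    (hv : ∀ S : ShortComplex C, S.ShortExact → v S.X₂ = v S.X₁ + v S.X₃)
    (hT : ∀ E : C, ∃ T : Subobject E, v (T : C) = 0 ∧
      ∀ L : Subobject E, v (L : C) = 0 → L ≤ T)
    (hfin : ∀ T : C, v T = 0 →
      ∀ f : ℕ →o Subobject T, ∃ n : ℕ, ∀ m : ℕ, n ≤ m → f m = f n) :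
    ∀ E : C, ∀ f : ℕ →o Subobject E, ∃ n : ℕ, ∀ m : ℕ, n ≤ m → f m = f n := by
  -- First: a chain all of whose members lie below a fixed `T` with `v T = 0` stabilizes.
  have chain_le_T : ∀ (E : C) (T : Subobject E), v (T : C) = 0 →
      ∀ f : ℕ →o Subobject E, (∀ n, f n ≤ T) → ∃ n, ∀ m, n ≤ m → f m = f n := by
    intro E T hT0 f hle
    let e := Subobject.subobjectOrderIso T
    let g : ℕ →o Subobject (T : C) :=
      ⟨fun n => e.symm ⟨f n, hle n⟩, fun a b hab => by
        apply e.symm.monotone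
        exact Subtype.mk_le_mk.mpr (f.monotone hab)⟩
    obtain ⟨n, hn⟩ := hfin (T : C) hT0 g
    refine ⟨n, fun m hm => ?_⟩
    have : e (g m) = e (g n) := by rw [hn m hm]
    have h2 : (⟨f m, hle m⟩ : Set.Iic T) = ⟨f n, hle n⟩ := by
      have h3 : e (e.symm ⟨f m, hle m⟩) = e (e.symm ⟨f n, hle n⟩) := this
      rwa [e.apply_symm_apply, e.apply_symm_apply] at h3
    exact congrArg Subtype.val h2
  intro E f
  -- Step 1: `v ∘ f` is monotone and bounded, so it attains a maximum.
  obtain ⟨N, hN⟩ : ∃ N, ∀ m, N ≤ m → v ((f m : Subobject E) : C) = v ((f N : Subobject E) : C) := by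
    set s : Set ℕ := Set.range (fun n => v ((f n : Subobject E) : C)) with hs
    have hne : s.Nonempty := ⟨_, ⟨0, rfl⟩⟩
    have hbdd : BddAbove s := ⟨v E, by rintro x ⟨n, rfl⟩; exact v_le_total v hv (f n)⟩
    obtain ⟨N, hNs⟩ := Nat.sSup_mem hne hbdd
    have hNs' : v ((f N : Subobject E) : C) = sSup s := hNs
    refine ⟨N, fun m hm => ?_⟩
    have h1 : v ((f N : Subobject E) : C) ≤ v ((f m : Subobject E) : C) :=
      v_le_of_le v hv (f.monotone hm)
    have h2 : v ((f m : Subobject E) : C) ≤ sSup s := le_csSup hbdd ⟨m, rfl⟩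
    omega
  -- Step 2: pass to the quotient `Q = E / f N`.
  set K : Subobject E := f N with hK
  have hKle : ∀ m : ℕ, K ≤ f (N + m) := fun m => f.monotone (Nat.le_add_right N m)
  set S : ℕ → Subobject E := fun m => f (N + m) with hS
  have hKSπ : ∀ m, (Subobject.ofLE K (S m) (hKle m)) ≫ (S m).arrow ≫ cokernel.π K.arrow = 0 := by
    intro m
    rw [← Category.assoc, Subobject.ofLE_arrow, cokernel.condition]
  have himg : ∀ m, (S m).arrow ≫ cokernel.π K.arrow =
      factorThruImage ((S m).arrow ≫ cokernel.π K.arrow) ≫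
        image.ι ((S m).arrow ≫ cokernel.π K.arrow) := fun m => (image.fac _).symm
  have hzero : ∀ m, Subobject.ofLE K (S m) (hKle m) ≫
      factorThruImage ((S m).arrow ≫ cokernel.π K.arrow) = 0 := by
    intro m
    have h := hKSπ m
    rw [himg m, ← Category.assoc] at h
    exact zero_of_comp_mono (image.ι ((S m).arrow ≫ cokernel.π K.arrow)) h
  -- short exactness: 0 → K → S m → image → 0
  have hexact : ∀ m, v ((S m : Subobject E) : C) = v ((K : Subobject E) : C) +
      v (image ((S m).arrow ≫ cokernel.π K.arrow)) := by
    intro m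
    refine hv (ShortComplex.mk (Subobject.ofLE K (S m) (hKle m))
      (factorThruImage ((S m).arrow ≫ cokernel.π K.arrow)) (hzero m)) ?_
    refine { exact := ShortComplex.exact_of_f_is_kernel _ ?_ }
    refine KernelFork.IsLimit.ofι _ _
      (fun {W} t ht => Abelian.monoLift K.arrow (t ≫ (S m).arrow) ?_) ?_ ?_
    · have ht' : t ≫ factorThruImage ((S m).arrow ≫ cokernel.π K.arrow) = 0 := ht
      simp only [Category.assoc]
      rw [himg m, ← Category.assoc, ht', zero_comp]
    · intro W t ht
      rw [← cancel_mono (S m).arrow, Category.assoc, Subobject.ofLE_arrow,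
        Abelian.monoLift_comp]
    · intro W t ht u hu
      have hu' : u ≫ Subobject.ofLE K (S m) (hKle m) = t := hu
      rw [← cancel_mono (Subobject.ofLE K (S m) (hKle m)), hu',
        ← cancel_mono (S m).arrow, Category.assoc, Subobject.ofLE_arrow,
        Abelian.monoLift_comp]
  have hv0 : ∀ m, v (image ((S m).arrow ≫ cokernel.π K.arrow)) = 0 := by
    intro m
    have h1 := hexact m
    have h2 : v ((S m : Subobject E) : C) = v ((K : Subobject E) : C) :=
      hN (N + m) (Nat.le_add_right N m)
    omega
  -- the chain of images in Q
  have gmono : ∀ {a b : ℕ}, a ≤ b →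
      Subobject.mk (image.ι ((S a).arrow ≫ cokernel.π K.arrow)) ≤
        Subobject.mk (image.ι ((S b).arrow ≫ cokernel.π K.arrow)) := by
    intro a b hab
    have hle : S a ≤ S b := f.monotone (by omega)
    let F : MonoFactorisation ((S a).arrow ≫ cokernel.π K.arrow) :=
      { I := image ((S b).arrow ≫ cokernel.π K.arrow)
        m := image.ι ((S b).arrow ≫ cokernel.π K.arrow)
        e := Subobject.ofLE (S a) (S b) hle ≫
          factorThruImage ((S b).arrow ≫ cokernel.π K.arrow)
        fac := by rw [Category.assoc, image.fac, ← Category.assoc, Subobject.ofLE_arrow] }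
    exact Subobject.mk_le_mk_of_comm (image.lift F) (image.lift_fac F)
  let g : ℕ →o Subobject (cokernel K.arrow) :=
    ⟨fun m => Subobject.mk (image.ι ((S m).arrow ≫ cokernel.π K.arrow)),
      fun a b hab => gmono hab⟩
  -- each g m has v = 0
  have hgv : ∀ m, v ((g m : Subobject (cokernel K.arrow)) : C) = 0 := by
    intro m
    have h := v_iso v hv (Subobject.underlyingIso (image.ι ((S m).arrow ≫ cokernel.π K.arrow)))
    exact h.trans (hv0 m)
  -- apply hT to Q, get the maximal v=0 subobject, and stabilize the chain g
  obtain ⟨T, hT0, hTmax⟩ := hT (cokernel K.arrow)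
  obtain ⟨n, hn⟩ := chain_le_T (cokernel K.arrow) T hT0 g (fun m => hTmax (g m) (hgv m))
  -- Step 3: recover stabilization of f. Key: g a ≤ g b → S a ≤ S b.
  have key : ∀ a b : ℕ, g a ≤ g b → S a ≤ S b := by
    intro a b hab
    have hKb : K.arrow ≫ cokernel.π (S b).arrow = 0 := by
      rw [← Subobject.ofLE_arrow (hKle b), Category.assoc, cokernel.condition, comp_zero]
    have hπφ : cokernel.π K.arrow ≫ cokernel.desc K.arrow (cokernel.π (S b).arrow) hKb =
        cokernel.π (S b).arrow := cokernel.π_desc _ _ _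
    have hιφ : image.ι ((S b).arrow ≫ cokernel.π K.arrow) ≫
        cokernel.desc K.arrow (cokernel.π (S b).arrow) hKb = 0 := by
      rw [← cancel_epi (factorThruImage ((S b).arrow ≫ cokernel.π K.arrow)), ← Category.assoc,
        image.fac, Category.assoc, hπφ, cokernel.condition, comp_zero]
    have hSa : (S a).arrow ≫ cokernel.π (S b).arrow = 0 := by
      rw [← hπφ, ← Category.assoc, himg a, Category.assoc,
        ← Subobject.ofMkLEMk_comp hab, Category.assoc, hιφ]
      simp
    exact Subobject.le_of_comm (Abelian.monoLift (S b).arrow (S a).arrow hSa)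
      (Abelian.monoLift_comp _ _ _)
  refine ⟨N + n, fun m hm => ?_⟩
  have h1 : N + (m - N) = m := by omega
  have h2 : g (m - N) = g n := hn (m - N) (by omega)
  have h3 : S (m - N) = S n :=
    le_antisymm (key (m - N) n (le_of_eq h2)) (key n (m - N) (ge_of_eq h2))
  calc f m = S (m - N) := by rw [hS]; exact congrArg f h1.symm
    _ = S n := h3
    _ = f (N + n) := rfl
end
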